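/- Let N, K ≥ 1 and let Ψ ∈ ℂ^N ⊗ ℂ^K be a graph coloring state with p_j(Ψ) ≥ 1/(4K) for all colors j. If some vertex ṽ has |α_{ṽ}|² < 1/(8KN), then for every color j, the probability of measuring color j but a vertex outcome different from ṽ when measuring (F_N ⊗ F_K)Ψ is greater than 1/(64KN²). -/

import Mathlib

open Finset

lemma exp_orth {N : ℕ} (hN : 0 < N) (w w' : Fin N) :
    ∑ v : Fin N, Complex.exp (2 * Real.pi * Complex.I * ((v : ℕ) * (w : ℕ) / N)) *
      (starRingEnd ℂ) (Complex.exp (2 * Real.pi * Complex.I * ((v : ℕ) * (w' : ℕ) / N)))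
      = if w = w' then (N : ℂ) else 0 := by
  have hN' : (N : ℂ) ≠ 0 := Nat.cast_ne_zero.mpr hN.ne'
  have hterm : ∀ v : Fin N,
      Complex.exp (2 * Real.pi * Complex.I * ((v:ℕ) * (w:ℕ) / N)) *
        (starRingEnd ℂ) (Complex.exp (2 * Real.pi * Complex.I * ((v:ℕ) * (w':ℕ) / N)))
      = Complex.exp (2 * Real.pi * Complex.I * (((w:ℕ):ℂ) - ((w':ℕ):ℂ)) / N) ^ (v : ℕ) := by
    intro v
    rw [← Complex.exp_conj, ← Complex.exp_nat_mul, ← Complex.exp_add]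
    congr 1
    have hc : (starRingEnd ℂ) (2 * (Real.pi:ℂ) * Complex.I * ((v:ℕ) * (w':ℕ) / N))
        = -(2 * (Real.pi:ℂ) * Complex.I * ((v:ℕ) * (w':ℕ) / N)) := by
      simp only [map_mul, map_div₀, Complex.conj_I, Complex.conj_ofReal, map_natCast, map_ofNat]
      ring
    rw [hc]
    field_simp
    ring
  rw [Finset.sum_congr rfl fun v _ => hterm v, Fin.sum_univ_eq_sum_range]
  by_cases h : w = w'
  · subst h
    simp
  · rw [if_neg h]
    set z := Complex.exp (2 * Real.pi * Complex.I * (((w:ℕ):ℂ) - ((w':ℕ):ℂ)) / N) with hz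
    have hzN : z ^ N = 1 := by
      rw [hz, ← Complex.exp_nat_mul]
      have : (N:ℂ) * (2 * Real.pi * Complex.I * (((w:ℕ):ℂ) - ((w':ℕ):ℂ)) / N)
          = (((w:ℤ) - (w':ℤ) : ℤ) : ℂ) * (2 * Real.pi * Complex.I) := by
        field_simp
        push_cast; ring
      rw [this, Complex.exp_int_mul_two_pi_mul_I]
    have hz1 : z ≠ 1 := by
      intro hcon
      rw [hz, Complex.exp_eq_one_iff] at hcon
      obtain ⟨n, hn⟩ := hcon
      have hpi : (2 * (Real.pi:ℂ) * Complex.I) ≠ 0 := by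
        simp [Real.pi_ne_zero, Complex.I_ne_zero]
      have : (((w:ℕ):ℂ) - ((w':ℕ):ℂ)) = n * N := by
        field_simp at hn
        have h2 : (2 * (Real.pi:ℂ) * Complex.I) * (((w:ℕ):ℂ) - ((w':ℕ):ℂ))
            = (2 * (Real.pi:ℂ) * Complex.I) * ((n:ℂ) * N) := by linear_combination (2 * (Real.pi:ℂ) * Complex.I) * hn
        exact mul_left_cancel₀ hpi h2
      have hint : ((w:ℕ):ℤ) - ((w':ℕ):ℤ) = n * N := by
        exact_mod_cast this
      have h1 : ((w:ℕ):ℤ) < N := by exact_mod_cast w.isLt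
      have h2 : ((w':ℕ):ℤ) < N := by exact_mod_cast w'.isLt
      have h3 : (0:ℤ) ≤ ((w:ℕ):ℤ) := by positivity
      have h4 : (0:ℤ) ≤ ((w':ℕ):ℤ) := by positivity
      have hne : ((w:ℕ):ℤ) ≠ ((w':ℕ):ℤ) := by
        intro hh
        exact h (Fin.ext (by exact_mod_cast hh))
      rcases lt_trichotomy n 0 with hn0 | hn0 | hn0
      · nlinarith [Int.le_of_lt_add_one (by linarith : n < 0 + 1)]
      · subst hn0; simp at hint; omega
      · nlinarith [Int.add_one_le_of_lt hn0]
    rw [geom_sum_eq hz1, hzN]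
    simp

lemma parseval {N : ℕ} (hN : 0 < N) (γ : Fin N → ℂ) :
    ∑ v : Fin N, ‖(1 / (Real.sqrt N : ℂ)) *
        ∑ w : Fin N, Complex.exp (2 * Real.pi * Complex.I * ((v:ℕ) * (w:ℕ) / N)) * γ w‖ ^ 2
      = ∑ w, ‖γ w‖ ^ 2 := by
  have hNR : (0:ℝ) < N := by exact_mod_cast hN
  set e : Fin N → Fin N → ℂ :=
    fun v w => Complex.exp (2 * Real.pi * Complex.I * ((v:ℕ) * (w:ℕ) / N)) with he
  have hnorm : ‖(1 / (Real.sqrt N : ℂ))‖^2 = 1 / N := by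
    rw [norm_div, norm_one]
    rw [Complex.norm_real]
    rw [Real.norm_eq_abs, abs_of_nonneg (Real.sqrt_nonneg _), div_pow, one_pow,
      Real.sq_sqrt hNR.le]
  have key : ∑ v : Fin N, ‖∑ w, e v w * γ w‖ ^ 2 = N * ∑ w, ‖γ w‖^2 := by
    have hc : ((∑ v : Fin N, ‖∑ w, e v w * γ w‖ ^ 2 : ℝ) : ℂ)
        = (((N : ℝ) * ∑ w, ‖γ w‖^2 : ℝ) : ℂ) := by
      push_cast
      calc ∑ v : Fin N, ((‖∑ w, e v w * γ w‖ : ℝ) : ℂ) ^ 2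
          = ∑ v : Fin N, (∑ w, e v w * γ w) * (starRingEnd ℂ) (∑ w, e v w * γ w) := by
            exact Finset.sum_congr rfl fun v _ => (Complex.mul_conj' _).symm
        _ = ∑ v : Fin N, ∑ w, ∑ w', (γ w * (starRingEnd ℂ) (γ w')) *
              (e v w * (starRingEnd ℂ) (e v w')) := by
            refine Finset.sum_congr rfl fun v _ => ?_
            rw [map_sum, Finset.sum_mul_sum]
            refine Finset.sum_congr rfl fun w _ => Finset.sum_congr rfl fun w' _ => ?_
            rw [map_mul]; ring
        _ = ∑ w, ∑ w', (γ w * (starRingEnd ℂ) (γ w')) *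
              ∑ v, e v w * (starRingEnd ℂ) (e v w') := by
            rw [Finset.sum_comm]
            refine Finset.sum_congr rfl fun w _ => ?_
            rw [Finset.sum_comm]
            refine Finset.sum_congr rfl fun w' _ => ?_
            rw [Finset.mul_sum]
        _ = ∑ w, (γ w * (starRingEnd ℂ) (γ w)) * N := by
            refine Finset.sum_congr rfl fun w _ => ?_
            have h2 : ∀ w' : Fin N, (γ w * (starRingEnd ℂ) (γ w')) *
                ∑ v, e v w * (starRingEnd ℂ) (e v w')
                = if w = w' then (γ w * (starRingEnd ℂ) (γ w)) * N else 0 := by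
              intro w'
              rw [he]
              rw [exp_orth hN w w']
              split
              · next hh => subst hh; rfl
              · simp
            rw [Finset.sum_congr rfl fun w' _ => h2 w']
            simp
        _ = (N : ℂ) * ∑ w, ((‖γ w‖ : ℝ) : ℂ)^2 := by
            rw [← Finset.sum_mul, mul_comm]
            congr 1
            exact Finset.sum_congr rfl fun w _ => Complex.mul_conj' (γ w)
    exact_mod_cast hc
  calc ∑ v : Fin N, ‖(1 / (Real.sqrt N : ℂ)) * ∑ w, e v w * γ w‖ ^ 2
      = ∑ v : Fin N, (1/(N:ℝ)) * ‖∑ w, e v w * γ w‖ ^ 2 := by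
        refine Finset.sum_congr rfl fun v _ => ?_
        rw [norm_mul, mul_pow, hnorm]
    _ = (1/(N:ℝ)) * ∑ v : Fin N, ‖∑ w, e v w * γ w‖ ^ 2 := by rw [Finset.mul_sum]
    _ = (1/(N:ℝ)) * ((N:ℝ) * ∑ w, ‖γ w‖^2) := by rw [key]
    _ = ∑ w, ‖γ w‖^2 := by field_simp


lemma dev {N : ℕ} (hN : 0 < N) (x : Fin N → ℝ) (hx : ∀ w, 0 ≤ x w) (p : ℝ)
    (hp : ∑ w, x w ^ 2 = p) (hppos : 0 < p) (vt : Fin N)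
    (hlt : (x vt)^2 < p / (2*N)) :
    (∑ w, x w)^2 / N < p - p/(16*N^2) := by
  have hNR : (0:ℝ) < N := by exact_mod_cast hN
  set T := ∑ w, x w with hT
  set c := Real.sqrt (p/N) with hc
  have hc2 : c^2 = p/N := Real.sq_sqrt (by positivity)
  have hcnn : 0 ≤ c := Real.sqrt_nonneg _
  set ε := ∑ w, |x w ^ 2 - p/N| with hε
  have hε1 : p/(2*N) < ε := by
    have h1 : |x vt ^ 2 - p/N| ≤ ε := by
      exact Finset.single_le_sum (f := fun w => |x w ^ 2 - p/(N:ℝ)|) (fun w _ => abs_nonneg _) (Finset.mem_univ vt)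
    have h2 : p/N - (x vt)^2 ≤ |x vt ^ 2 - p/N| := by
      rw [abs_sub_comm]; exact le_abs_self _
    have h3 : p/(2*N) < p/N - (x vt)^2 := by
      have : p/N = p/(2*N) + p/(2*N) := by field_simp; ring
      linarith
    linarith
  have hεnn : 0 ≤ ε := Finset.sum_nonneg fun w _ => abs_nonneg _
  have hCS : ε^2 ≤ (∑ w, |x w - c|^2) * (∑ w, (x w + c)^2) := by
    have key := Finset.sum_mul_sq_le_sq_mul_sq Finset.univ (fun w => |x w - c|) (fun w => x w + c)
    have heq : ε = ∑ w, |x w - c| * (x w + c) := by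
      refine Finset.sum_congr rfl fun w _ => ?_
      have h4 : x w ^ 2 - p/N = (x w - c) * (x w + c) := by rw [← hc2]; ring
      rw [h4, abs_mul, abs_of_nonneg (add_nonneg (hx w) hcnn)]
    rw [heq]
    exact key
  have hA : ∑ w, |x w - c|^2 = 2*p - 2*c*T := by
    have h5 : ∀ w : Fin N, |x w - c|^2 = x w^2 - (2*c)*(x w) + c^2 := fun w => by
      rw [sq_abs]; ring
    rw [Finset.sum_congr rfl fun w _ => h5 w, Finset.sum_add_distrib, Finset.sum_sub_distrib,
      ← Finset.mul_sum, hp, Finset.sum_const, Finset.card_fin, nsmul_eq_mul, hc2]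
    field_simp
    ring
  have hB : ∑ w, (x w + c)^2 = 2*p + 2*c*T := by
    have h5 : ∀ w : Fin N, (x w + c)^2 = x w^2 + (2*c)*(x w) + c^2 := fun w => by ring
    rw [Finset.sum_congr rfl fun w _ => h5 w, Finset.sum_add_distrib, Finset.sum_add_distrib,
      ← Finset.mul_sum, hp, Finset.sum_const, Finset.card_fin, nsmul_eq_mul, hc2]
    field_simp
    ring
  rw [hA, hB] at hCS
  have hprod : ε^2 ≤ 4*p^2 - 4*(p/N)*T^2 := by nlinarith [hc2]
  have hε2 : (p/(2*N))^2 < ε^2 := by nlinarith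
  have hT2 : (p/N)*T^2 < p^2 - p^2/(16*N^2) := by
    have e1 : (p/(2*(N:ℝ)))^2 = 4*(p^2/(16*(N:ℝ)^2)) := by field_simp; ring
    linarith
  have key : p * ((∑ w, x w)^2/N) < p * (p - p/(16*(N:ℝ)^2)) := by
    have e2 : p * ((∑ w, x w)^2/(N:ℝ)) = (p/N)*T^2 := by rw [hT]; ring
    have e3 : p * (p - p/(16*(N:ℝ)^2)) = p^2 - p^2/(16*(N:ℝ)^2) := by ring
    linarith
  exact lt_of_mul_lt_mul_left key hppos.le

lemma norm_exp_one (a b c : ℕ) :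
    ‖Complex.exp (2 * Real.pi * Complex.I * ((a:ℂ) * (b:ℂ) / (c:ℂ)))‖ = 1 := by
  have h : 2 * (Real.pi:ℂ) * Complex.I * ((a:ℂ) * (b:ℂ) / (c:ℂ))
      = ((2 * Real.pi * (a * b / c) : ℝ) : ℂ) * Complex.I := by push_cast; ring
  rw [h, Complex.norm_exp_ofReal_mul_I]


open Finset Real in
/-- Blier–Tapp Lemma 3.7 (core step): if every color is measured with probability at least
`1/(4K)` after `I_N ⊗ F_K`, and some vertex `ṽ` is light (`|α_ṽ|² < 1/(8KN)`), then for every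
color `j`, measuring `(F_N ⊗ F_K)Ψ` yields color `j` together with a vertex outcome different
from `ṽ` with probability greater than `1/(64KN²)`. -/
theorem stmt_16 {N K : ℕ} (hN : 0 < N) (hK : 0 < K)
    (α : Fin N → ℂ) (β : Fin N → Fin K → ℂ)
    (hα : ∑ v, ‖α v‖ ^ 2 = 1) (hβ : ∀ v, ∑ j, ‖β v j‖ ^ 2 = 1)
    (hp : ∀ j : Fin K,
      1 / (4 * K) ≤ ∑ v, ‖α v * ((1 / Real.sqrt K : ℂ) *
        ∑ j' : Fin K,
          β v j' * Complex.exp (2 * Real.pi * Complex.I * ((j' : ℕ) * (j : ℕ) / K)))‖ ^ 2)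
    (vt : Fin N) (hvt : ‖α vt‖ ^ 2 < 1 / (8 * K * N)) :
    ∀ j : Fin K,
      1 / (64 * K * N ^ 2) <
        ∑ v ∈ Finset.univ.filter (fun v : Fin N => v ≠ vt),
          ‖(1 / Real.sqrt N : ℂ) * (1 / Real.sqrt K : ℂ) *
            ∑ w : Fin N, ∑ j' : Fin K,
              Complex.exp (2 * Real.pi * Complex.I * ((v : ℕ) * (w : ℕ) / N)) *
              Complex.exp (2 * Real.pi * Complex.I * ((j' : ℕ) * (j : ℕ) / K)) *
              (α w * β w j')‖ ^ 2 := by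
  intro j
  have hNR : (0:ℝ) < N := by exact_mod_cast hN
  have hKR : (0:ℝ) < K := by exact_mod_cast hK
  set γ : Fin N → ℂ := fun w => α w * ((1 / Real.sqrt K : ℂ) *
    ∑ j' : Fin K, β w j' * Complex.exp (2 * Real.pi * Complex.I * ((j' : ℕ) * (j : ℕ) / K)))
    with hγ
  have hpj : 1 / (4 * (K:ℝ)) ≤ ∑ v, ‖γ v‖ ^ 2 := hp j
  set p : ℝ := ∑ v, ‖γ v‖ ^ 2 with hpdef
  have hppos : 0 < p := lt_of_lt_of_le (by positivity) hpj
  have hγle : ∀ w, ‖γ w‖^2 ≤ ‖α w‖^2 := by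
    intro w
    rw [hγ]
    simp only
    rw [norm_mul, mul_pow]
    set S : ℂ := ∑ j' : Fin K, β w j' *
      Complex.exp (2 * Real.pi * Complex.I * ((j' : ℕ) * (j : ℕ) / K)) with hS
    have h1 : ‖(1 / Real.sqrt K : ℂ)‖^2 = 1/(K:ℝ) := by
      rw [norm_div, norm_one, Complex.norm_real, Real.norm_eq_abs,
        abs_of_nonneg (Real.sqrt_nonneg _), div_pow, one_pow, Real.sq_sqrt hKR.le]
    have h2 : ‖S‖ ≤ ∑ j' : Fin K, ‖β w j'‖ := by
      refine le_trans (norm_sum_le _ _) (Finset.sum_le_sum fun j' _ => ?_)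
      rw [norm_mul, norm_exp_one, mul_one]
    have h3 : (∑ j' : Fin K, ‖β w j'‖)^2 ≤ (K:ℝ) := by
      have hcs := Finset.sum_mul_sq_le_sq_mul_sq Finset.univ
        (fun j' : Fin K => ‖β w j'‖) (fun _ => (1:ℝ))
      simp only [mul_one, one_pow, Finset.sum_const, Finset.card_fin, nsmul_eq_mul] at hcs
      calc (∑ j' : Fin K, ‖β w j'‖)^2 ≤ (∑ j' : Fin K, ‖β w j'‖^2) * (K:ℝ) := hcs
        _ = (K:ℝ) := by rw [hβ w]; ring
    have h4 : ‖S‖^2 ≤ (K:ℝ) :=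
      le_trans (pow_le_pow_left₀ (norm_nonneg _) h2 2) h3
    have h5 : ‖(1 / Real.sqrt K : ℂ) * S‖^2 ≤ 1 := by
      rw [norm_mul, mul_pow, h1]
      calc 1/(K:ℝ) * ‖S‖^2 ≤ 1/(K:ℝ) * K := by
            exact mul_le_mul_of_nonneg_left h4 (by positivity)
        _ = 1 := by field_simp
    nlinarith [sq_nonneg ‖α w‖, norm_nonneg (α w), norm_nonneg ((1 / Real.sqrt K : ℂ) * S),
      sq_nonneg ‖(1 / Real.sqrt K : ℂ) * S‖]
  have hγvt : ‖γ vt‖^2 < p/(2*(N:ℝ)) := by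
    have hb : (1:ℝ)/(8*K*N) ≤ p/(2*N) := by
      rw [div_le_div_iff₀ (by positivity) (by positivity)]
      have h1 : 1 ≤ p * (4*(K:ℝ)) := by rwa [div_le_iff₀ (by positivity)] at hpj
      nlinarith
    calc ‖γ vt‖^2 ≤ ‖α vt‖^2 := hγle vt
      _ < 1/(8*K*N) := hvt
      _ ≤ p/(2*N) := hb
  have hdev := dev hN (fun w => ‖γ w‖) (fun w => norm_nonneg _) p rfl hppos vt hγvt
  have hSv : ∀ v : Fin N,
      (1 / Real.sqrt N : ℂ) * (1 / Real.sqrt K : ℂ) *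
        ∑ w : Fin N, ∑ j' : Fin K,
          Complex.exp (2 * Real.pi * Complex.I * ((v : ℕ) * (w : ℕ) / N)) *
          Complex.exp (2 * Real.pi * Complex.I * ((j' : ℕ) * (j : ℕ) / K)) *
          (α w * β w j')
      = (1 / Real.sqrt N : ℂ) *
        ∑ w : Fin N, Complex.exp (2 * Real.pi * Complex.I * ((v : ℕ) * (w : ℕ) / N)) * γ w := by
    intro v
    rw [hγ]
    simp only [Finset.mul_sum]
    refine Finset.sum_congr rfl fun w _ => ?_
    refine Finset.sum_congr rfl fun j' _ => ?_
    ring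
  have htot : ∑ v : Fin N,
      ‖(1 / Real.sqrt N : ℂ) * (1 / Real.sqrt K : ℂ) *
        ∑ w : Fin N, ∑ j' : Fin K,
          Complex.exp (2 * Real.pi * Complex.I * ((v : ℕ) * (w : ℕ) / N)) *
          Complex.exp (2 * Real.pi * Complex.I * ((j' : ℕ) * (j : ℕ) / K)) *
          (α w * β w j')‖ ^ 2 = p := by
    rw [Finset.sum_congr rfl fun v _ => by rw [hSv v]]
    exact parseval hN γ
  have hvtle : ‖(1 / Real.sqrt N : ℂ) * (1 / Real.sqrt K : ℂ) *
        ∑ w : Fin N, ∑ j' : Fin K,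
          Complex.exp (2 * Real.pi * Complex.I * ((vt : ℕ) * (w : ℕ) / N)) *
          Complex.exp (2 * Real.pi * Complex.I * ((j' : ℕ) * (j : ℕ) / K)) *
          (α w * β w j')‖ ^ 2 ≤ (∑ w, ‖γ w‖)^2 / N := by
    rw [hSv vt]
    have hnb : ‖(1 / Real.sqrt N : ℂ) *
        ∑ w : Fin N, Complex.exp (2 * Real.pi * Complex.I * ((vt : ℕ) * (w : ℕ) / N)) * γ w‖
        ≤ (1/Real.sqrt N) * ∑ w, ‖γ w‖ := by
      rw [norm_mul]
      refine mul_le_mul (le_of_eq ?_) ?_ (norm_nonneg _) (by positivity)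
      · rw [norm_div, norm_one, Complex.norm_real, Real.norm_eq_abs,
          abs_of_nonneg (Real.sqrt_nonneg _)]
      · refine le_trans (norm_sum_le _ _) (Finset.sum_le_sum fun w _ => ?_)
        rw [norm_mul, norm_exp_one, one_mul]
    calc ‖(1 / Real.sqrt N : ℂ) *
        ∑ w : Fin N, Complex.exp (2 * Real.pi * Complex.I * ((vt : ℕ) * (w : ℕ) / N)) * γ w‖ ^ 2
        ≤ ((1/Real.sqrt N) * ∑ w, ‖γ w‖)^2 := pow_le_pow_left₀ (norm_nonneg _) hnb 2
      _ = (∑ w, ‖γ w‖)^2 / N := by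
          rw [mul_pow, div_pow, one_pow, Real.sq_sqrt hNR.le]; ring
  rw [Finset.filter_ne', Finset.sum_erase_eq_sub (Finset.mem_univ vt)]
  have hlast : 1/(64*(K:ℝ)*(N:ℝ)^2) ≤ p/(16*(N:ℝ)^2) := by
    rw [div_le_div_iff₀ (by positivity) (by positivity)]
    have h1 : 1 ≤ p * (4*(K:ℝ)) := by rwa [div_le_iff₀ (by positivity)] at hpj
    nlinarith
  have hc : ((fun w => ‖γ w‖) : Fin N → ℝ) = fun w => ‖γ w‖ := rfl
  linarith [htot, hvtle, hdev, hlast]
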